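/- Let G be an instance of the rank-maximal matching problem and let H be obtained from G by adding a new applicant vertex a together with a set of ranked edges joining a to posts of G. If M is a rank-maximal matching of G and M' is a rank-maximal matching of H, then |M| ≤ |M'| ≤ |M| + 1. -/

import Mathlib

open SimpleGraph

variable {V : Type*}

/-- `M` is a matching in the graph `G`: a set of edges of `G` no two of which
share a vertex. -/
def IsMatchingIn (G : SimpleGraph V) (M : Set (Sym2 V)) : Prop :=
  M ⊆ G.edgeSet ∧ ∀ e ∈ M, ∀ f ∈ M, e ≠ f → ∀ v : V, v ∈ e → v ∉ f

/-- A vertex `v` is matched (covered) by the matching `M`. -/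
def IsMatchedBy (M : Set (Sym2 V)) (v : V) : Prop :=
  ∃ e ∈ M, v ∈ e

/-- The list of edges of a path given as a list of vertices. -/
def pathEdges (p : List V) : List (Sym2 V) :=
  (p.zip p.tail).map fun q => s(q.1, q.2)

/-- `p` is an alternating path from `u` to `v` in `G` with respect to the matching `M`:
its consecutive vertices are adjacent in `G`, it repeats no vertex, and its edges
alternate between edges in `M` and edges not in `M`. -/
def IsAltPath (G : SimpleGraph V) (M : Set (Sym2 V)) (u v : V) (p : List V) : Prop :=
  p.Chain' G.Adj ∧ p.Nodup ∧
    (pathEdges p).Chain' (fun e f => (e ∈ M ↔ f ∉ M)) ∧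
    p.head? = some u ∧ p.getLast? = some v

/-- `v` is even with respect to `M`: there is an even-length alternating path from
an `M`-unmatched vertex to `v`. -/
def EvenVtx (G : SimpleGraph V) (M : Set (Sym2 V)) (v : V) : Prop :=
  ∃ u p, ¬ IsMatchedBy M u ∧ IsAltPath G M u v p ∧ Even (pathEdges p).length

/-- `v` is odd with respect to `M`: there is an odd-length alternating path from
an `M`-unmatched vertex to `v`. -/
def OddVtx (G : SimpleGraph V) (M : Set (Sym2 V)) (v : V) : Prop :=
  ∃ u p, ¬ IsMatchedBy M u ∧ IsAltPath G M u v p ∧ Odd (pathEdges p).length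

/-- `v` is unreachable with respect to `M`: there is no alternating path from any
`M`-unmatched vertex to `v`. -/
def UnreachableVtx (G : SimpleGraph V) (M : Set (Sym2 V)) (v : V) : Prop :=
  ¬ ∃ u p, ¬ IsMatchedBy M u ∧ IsAltPath G M u v p

/-- `M` is a maximum (cardinality) matching in `G`. -/
def IsMaxMatching (G : SimpleGraph V) (M : Set (Sym2 V)) : Prop :=
  IsMatchingIn G M ∧ ∀ N, IsMatchingIn G N → N.ncard ≤ M.ncard

/-- `G` is bipartite with the two sides given by `side`. -/
def IsBipartiteWith (G : SimpleGraph V) (side : V → Bool) : Prop :=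
  ∀ u v, G.Adj u v → side u ≠ side v

/-- The signature of a matching: `signature rank M i` is the number of edges of
rank `i` in `M`. -/
noncomputable def signature (rank : Sym2 V → ℕ) (M : Set (Sym2 V)) (i : ℕ) : ℕ :=
  {e ∈ M | rank e = i}.ncard

/-- Lexicographic comparison of signatures on coordinates `1, …, r`:
`SigGt r x y` means `x ≻ y`. -/
def SigGt (r : ℕ) (x y : ℕ → ℕ) : Prop :=
  ∃ k, 1 ≤ k ∧ k ≤ r ∧ (∀ j, 1 ≤ j → j < k → x j = y j) ∧ y k < x k

/-- `M` is a rank-maximal matching of the instance `(G, rank)` with ranks in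
`{1, …, r}`: no matching of `G` has a lexicographically greater signature. -/
def IsRankMaximal (G : SimpleGraph V) (rank : Sym2 V → ℕ) (r : ℕ)
    (M : Set (Sym2 V)) : Prop :=
  IsMatchingIn G M ∧
    ∀ N, IsMatchingIn G N → ¬ SigGt r (signature rank N) (signature rank M)

/-- All edges of `G` carry a rank in `{1, …, r}`. -/
def RanksBounded (G : SimpleGraph V) (rank : Sym2 V → ℕ) (r : ℕ) : Prop :=
  ∀ e ∈ G.edgeSet, 1 ≤ rank e ∧ rank e ≤ r

/-- Let `H` be obtained from `G` by adding a new applicant `a`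
(modelled as a vertex isolated in `G`) together with ranked edges from `a` to a
set `N` of posts. If `M` is a rank-maximal matching of `G` and `M'` is a
rank-maximal matching of `H`, then `|M| ≤ |M'| ≤ |M| + 1`. -/

private lemma altKey {V : Type*} :
    ∀ (n : ℕ) (X Y : Set (Sym2 V)) (a : V),
      X.Finite → Y.Finite →
      (∀ e ∈ X ∪ Y, ¬ e.IsDiag) →
      (∀ e ∈ X, ∀ f ∈ X, e ≠ f → ∀ v : V, v ∈ e → v ∉ f) →
      (∀ e ∈ Y, ∀ f ∈ Y, e ≠ f → ∀ v : V, v ∈ e → v ∉ f) →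
      (∀ e ∈ X, a ∉ e) →
      (∀ e ∈ X ∪ Y, ∃ v ∈ e, (fromEdgeSet (X ∪ Y)).Reachable a v) →
      X.ncard + Y.ncard ≤ n →
      X.ncard ≤ Y.ncard ∧ Y.ncard ≤ X.ncard + 1 := by
  intro n
  induction n with
  | zero =>
    intro X Y a _ _ _ _ _ _ _ hle
    omega
  | succ n ih =>
    intro X Y a hXfin hYfin hdiag hXm hYm hXa hreach hle
    classical
    by_cases hay : ∃ e ∈ Y, a ∈ e
    · obtain ⟨e₀, he₀Y, hae₀⟩ := hay
      obtain ⟨b, rfl⟩ := Sym2.mem_iff_exists.mp hae₀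
      have hab : a ≠ b := by
        have := hdiag _ (Set.mem_union_right _ he₀Y)
        simpa using this
      set Y' : Set (Sym2 V) := Y \ {s(a, b)} with hY'def
      -- a is in no edge of X ∪ Y'
      have haonly : ∀ e ∈ X ∪ Y, a ∈ e → e = s(a, b) := by
        intro e he hae
        rcases he with he | he
        · exact absurd hae (hXa e he)
        · by_contra hne
          exact hYm e he _ he₀Y hne a hae hae₀
      -- the key reachability transfer
      have key : ∀ v, v ≠ a → (fromEdgeSet (X ∪ Y)).Reachable a v →
          (fromEdgeSet (Y' ∪ X)).Reachable b v := by
        intro v hva hr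
        obtain ⟨q, hq⟩ := hr.some.toPath
        cases q with
        | nil => exact absurd rfl hva
        | @cons _ w _ hadj tail =>
          rw [fromEdgeSet_adj] at hadj
          have hwb : b = w := by
            have := haonly _ hadj.1 (Sym2.mem_mk_left a w)
            exact (Sym2.congr_right.mp this).symm
          subst hwb
          rw [Walk.cons_isPath_iff] at hq
          refine ⟨tail.transfer _ ?_⟩
          intro f hf
          have hfD := tail.edges_subset_edgeSet hf
          rw [edgeSet_fromEdgeSet] at hfD ⊢
          refine ⟨?_, hfD.2⟩
          have hfne : f ≠ s(a, b) := by
            intro h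
            subst h
            exact hq.2 (Walk.fst_mem_support_of_mem_edges tail hf)
          rcases hfD.1 with h | h
          · exact Set.mem_union_right _ h
          · exact Set.mem_union_left _ ⟨h, hfne⟩
      have hbY' : ∀ e ∈ Y', b ∉ e := by
        intro e he hbe
        exact hYm e he.1 _ he₀Y (fun h => he.2 (by simp [h])) b hbe (Sym2.mem_mk_right a b)
      have hcard : Y.ncard = Y'.ncard + 1 := by
        rw [hY'def, Set.ncard_diff_singleton_add_one he₀Y hYfin]
      have := ih Y' X b hYfin.diff hXfin
        (fun e he => hdiag e (by rcases he with h | h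
                                 · exact Set.mem_union_right _ h.1
                                 · exact Set.mem_union_left _ h))
        (fun e he f hf => hYm e he.1 f hf.1) hXm hbY'
        (by
          intro e he
          have heXY : e ∈ X ∪ Y := by
            rcases he with h | h
            · exact Set.mem_union_right _ h.1
            · exact Set.mem_union_left _ h
          obtain ⟨v, hv, hr⟩ := hreach e heXY
          have hva : v ≠ a := by
            intro h
            subst h
            have := haonly e heXY hv
            subst this
            rcases he with h | h
            · exact h.2 rfl
            · exact hXa _ h hae₀
          exact ⟨v, hv, key v hva hr⟩)
        (by omega)
      omega
    · -- no edge at a at all, so nothing is reachable: X and Y are empty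
      push_neg at hay
      have hnone : ∀ e ∈ X ∪ Y, a ∉ e := by
        intro e he
        rcases he with h | h
        · exact hXa e h
        · exact hay e h
      have hempty : ∀ e, e ∉ X ∪ Y := by
        intro e he
        obtain ⟨v, hv, hr⟩ := hreach e he
        obtain ⟨p⟩ := hr
        cases p with
        | nil => exact hnone e he hv
        | @cons _ w _ hadj tail =>
          rw [fromEdgeSet_adj] at hadj
          exact hnone _ hadj.1 (Sym2.mem_mk_left a w)
      have hX0 : X = ∅ := Set.eq_empty_iff_forall_notMem.mpr
        (fun e he => hempty e (Set.mem_union_left _ he))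
      have hY0 : Y = ∅ := Set.eq_empty_iff_forall_notMem.mpr
        (fun e he => hempty e (Set.mem_union_right _ he))
      simp [hX0, hY0]

private lemma sig_union {V : Type*} [Fintype V] (rank : Sym2 V → ℕ)
    (A B : Set (Sym2 V)) (h : Disjoint A B) (i : ℕ) :
    signature rank (A ∪ B) i = signature rank A i + signature rank B i := by
  have heq : {e ∈ A ∪ B | rank e = i} = {e ∈ A | rank e = i} ∪ {e ∈ B | rank e = i} := by
    ext e
    simp only [Set.mem_sep_iff, Set.mem_union, Set.mem_setOf_eq]
    tauto
  rw [signature, heq, Set.ncard_union_eq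
    (h.mono (Set.sep_subset _ _) (Set.sep_subset _ _)) (Set.toFinite _) (Set.toFinite _)]
  rfl

private lemma card_sig {V : Type*} [Fintype V] (rank : Sym2 V → ℕ) (r : ℕ) (S : Set (Sym2 V))
    (hS : ∀ e ∈ S, 1 ≤ rank e ∧ rank e ≤ r) :
    S.ncard = ∑ i ∈ Finset.Icc 1 r, signature rank S i := by
  classical
  have hfin : S.Finite := Set.toFinite S
  have h1 : ∀ i, signature rank S i = (hfin.toFinset.filter (fun e => rank e = i)).card := by
    intro i
    have heq : {e ∈ S | rank e = i} = ↑(hfin.toFinset.filter (fun e => rank e = i)) := by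
      ext e
      simp [Set.Finite.mem_toFinset]
    rw [signature, heq, Set.ncard_coe_finset]
  rw [Set.ncard_eq_toFinset_card S hfin,
    Finset.card_eq_sum_card_fiberwise (f := rank) (t := Finset.Icc 1 r)
      (fun e he => Finset.mem_Icc.mpr (hS e (hfin.mem_toFinset.mp he)))]
  exact Finset.sum_congr rfl fun i _ => (h1 i).symm

set_option maxHeartbeats 1000000 in
theorem add_applicant_cardinality [Fintype V]
    (G H : SimpleGraph V) (side : V → Bool)
    (hbipG : IsBipartiteWith G side)
    (rank : Sym2 V → ℕ) (r : ℕ) (hr : RanksBounded H rank r)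
    (a : V) (ha : side a = false) (haG : ∀ v, ¬ G.Adj a v)
    (N : Set V) (hNside : ∀ p ∈ N, side p = true)
    (hH : ∀ u v, H.Adj u v ↔ G.Adj u v ∨ (u = a ∧ v ∈ N) ∨ (v = a ∧ u ∈ N))
    (M M' : Set (Sym2 V))
    (hM : IsRankMaximal G rank r M) (hM' : IsRankMaximal H rank r M') :
    M.ncard ≤ M'.ncard ∧ M'.ncard ≤ M.ncard + 1 := by
  classical
  obtain ⟨⟨hMsub, hMdis⟩, hMopt⟩ := hM
  obtain ⟨⟨hM'sub, hM'dis⟩, hM'opt⟩ := hM'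
  have hle : G ≤ H := fun {u v} h => (hH u v).mpr (Or.inl h)
  have hGH : G.edgeSet ⊆ H.edgeSet := SimpleGraph.edgeSet_mono hle
  have haM : ∀ e ∈ M, a ∉ e := by
    intro e he hae
    obtain ⟨c, rfl⟩ := Sym2.mem_iff_exists.mp hae
    exact haG c (G.mem_edgeSet.mp (hMsub he))
  have hHG : ∀ e ∈ H.edgeSet, a ∉ e → e ∈ G.edgeSet := by
    intro e
    induction e using Sym2.ind with
    | _ u w =>
      intro he hae
      rw [SimpleGraph.mem_edgeSet] at he ⊢
      rcases (hH u w).mp he with h | ⟨rfl, _⟩ | ⟨rfl, _⟩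
      · exact h
      · exact absurd (Sym2.mem_mk_left u w) hae
      · exact absurd (Sym2.mem_mk_right u w) hae
  set X : Set (Sym2 V) := M \ M' with hXdef
  set Y : Set (Sym2 V) := M' \ M with hYdef
  set K : Set (Sym2 V) := M ∩ M' with hKdef
  set D : SimpleGraph V := SimpleGraph.fromEdgeSet (X ∪ Y) with hDdef
  set Xin : Set (Sym2 V) := {e ∈ X | ∃ v ∈ e, D.Reachable a v} with hXindef
  set Xout : Set (Sym2 V) := {e ∈ X | ¬ ∃ v ∈ e, D.Reachable a v} with hXoutdef
  set Yin : Set (Sym2 V) := {e ∈ Y | ∃ v ∈ e, D.Reachable a v} with hYindef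
  set Yout : Set (Sym2 V) := {e ∈ Y | ¬ ∃ v ∈ e, D.Reachable a v} with hYoutdef
  have hXYH : X ∪ Y ⊆ H.edgeSet := by
    rintro e (h | h)
    · exact hGH (hMsub h.1)
    · exact hM'sub h.1
  have hdiag : ∀ e ∈ X ∪ Y, ¬ e.IsDiag := fun e he => H.not_isDiag_of_mem_edgeSet (hXYH he)
  have hspread2 : ∀ u w, s(u, w) ∈ X ∪ Y → D.Reachable a u → D.Reachable a w := by
    intro u w hmem hu
    have hne : u ≠ w := by
      have := hdiag _ hmem
      simpa using this
    have hadj : D.Adj u w := by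
      rw [hDdef, SimpleGraph.fromEdgeSet_adj]
      exact ⟨hmem, hne⟩
    exact hu.trans hadj.reachable
  have hspread : ∀ e ∈ X ∪ Y, (∃ v ∈ e, D.Reachable a v) → ∀ v ∈ e, D.Reachable a v := by
    intro e
    induction e using Sym2.ind with
    | _ u w =>
      rintro hmem ⟨v, hv, hrv⟩ x hx
      rw [Sym2.mem_iff] at hv hx
      have hmem' : s(w, u) ∈ X ∪ Y := by rwa [Sym2.eq_swap] at hmem
      rcases hv with rfl | rfl <;> rcases hx with rfl | rfl
      · exact hrv
      · exact hspread2 _ _ hmem hrv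
      · exact hspread2 _ _ hmem' hrv
      · exact hrv
  have hYouta : ∀ e ∈ Yout, a ∉ e := by
    intro e he hae
    exact he.2 ⟨a, hae, SimpleGraph.Reachable.refl a⟩
  have hcross1 : ∀ e ∈ K ∪ Xin, ∀ f ∈ Yout, ∀ v : V, v ∈ e → v ∈ f → False := by
    rintro e (he | he) f hf v hv hvf
    · exact hM'dis e he.2 f hf.1.1 (fun h => hf.1.2 (h ▸ he.1)) v hv hvf
    · have hrv : D.Reachable a v := hspread e (Set.mem_union_left _ he.1) he.2 v hv
      exact hf.2 ⟨v, hvf, hrv⟩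
  have hcross2 : ∀ e ∈ K ∪ Yin, ∀ f ∈ Xout, ∀ v : V, v ∈ e → v ∈ f → False := by
    rintro e (he | he) f hf v hv hvf
    · exact hMdis e he.1 f hf.1.1 (fun h => hf.1.2 (h ▸ he.2)) v hv hvf
    · have hrv : D.Reachable a v := hspread e (Set.mem_union_right _ he.1) he.2 v hv
      exact hf.2 ⟨v, hvf, hrv⟩
  have hN1 : IsMatchingIn G (K ∪ Xin ∪ Yout) := by
    constructor
    · rintro e ((he | he) | he)
      · exact hMsub he.1
      · exact hMsub he.1.1
      · exact hHG e (hM'sub he.1.1) (hYouta e he)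
    · rintro e he f hf hne v hv hvf
      rcases he with he | he <;> rcases hf with hf | hf
      · have heM : e ∈ M := by rcases he with h | h; exacts [h.1, h.1.1]
        have hfM : f ∈ M := by rcases hf with h | h; exacts [h.1, h.1.1]
        exact hMdis e heM f hfM hne v hv hvf
      · exact hcross1 e he f hf v hv hvf
      · exact hcross1 f hf e he v hvf hv
      · exact hM'dis e he.1.1 f hf.1.1 hne v hv hvf
  have hN2 : IsMatchingIn H (K ∪ Yin ∪ Xout) := by
    constructor
    · rintro e ((he | he) | he)
      · exact hM'sub he.2
      · exact hM'sub he.1.1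
      · exact hGH (hMsub he.1.1)
    · rintro e he f hf hne v hv hvf
      rcases he with he | he <;> rcases hf with hf | hf
      · have heM : e ∈ M' := by rcases he with h | h; exacts [h.2, h.1.1]
        have hfM : f ∈ M' := by rcases hf with h | h; exacts [h.2, h.1.1]
        exact hM'dis e heM f hfM hne v hv hvf
      · exact hcross2 e he f hf v hv hvf
      · exact hcross2 f hf e he v hvf hv
      · exact hMdis e he.1.1 f hf.1.1 hne v hv hvf
  -- disjointness facts
  have hd1 : Disjoint (K ∪ Xin) Yout := by
    rw [Set.disjoint_left]
    rintro e (he | he) hf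
    · exact hf.1.2 he.1
    · exact hf.1.2 he.1.1
  have hd2 : Disjoint (K ∪ Yin) Xout := by
    rw [Set.disjoint_left]
    rintro e (he | he) hf
    · exact hf.1.2 he.2
    · exact hf.1.2 he.1.1
  have hd3 : Disjoint (K ∪ Xin) Xout := by
    rw [Set.disjoint_left]
    rintro e (he | he) hf
    · exact hf.1.2 he.2
    · exact hf.2 he.2
  have hd4 : Disjoint (K ∪ Yin) Yout := by
    rw [Set.disjoint_left]
    rintro e (he | he) hf
    · exact hf.1.2 he.1
    · exact hf.2 he.2
  have hd5 : Disjoint K Xin := by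
    rw [Set.disjoint_left]
    intro e he hf
    exact hf.1.2 he.2
  have hd6 : Disjoint K Yin := by
    rw [Set.disjoint_left]
    intro e he hf
    exact hf.1.2 he.1
  -- decompositions
  have hMdecomp : M = (K ∪ Xin) ∪ Xout := by
    ext e
    constructor
    · intro he
      by_cases h1 : e ∈ M'
      · exact Or.inl (Or.inl ⟨he, h1⟩)
      · by_cases h2 : ∃ v ∈ e, D.Reachable a v
        · exact Or.inl (Or.inr ⟨⟨he, h1⟩, h2⟩)
        · exact Or.inr ⟨⟨he, h1⟩, h2⟩
    · rintro ((he | he) | he)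
      exacts [he.1, he.1.1, he.1.1]
  have hM'decomp : M' = (K ∪ Yin) ∪ Yout := by
    ext e
    constructor
    · intro he
      by_cases h1 : e ∈ M
      · exact Or.inl (Or.inl ⟨h1, he⟩)
      · by_cases h2 : ∃ v ∈ e, D.Reachable a v
        · exact Or.inl (Or.inr ⟨⟨he, h1⟩, h2⟩)
        · exact Or.inr ⟨⟨he, h1⟩, h2⟩
    · rintro ((he | he) | he)
      exacts [he.2, he.1.1, he.1.1]
  -- signature identities
  have hsigM : ∀ i, signature rank M i
      = signature rank (K ∪ Xin) i + signature rank Xout i := by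
    intro i
    rw [hMdecomp]
    exact sig_union rank _ _ hd3 i
  have hsigM' : ∀ i, signature rank M' i
      = signature rank (K ∪ Yin) i + signature rank Yout i := by
    intro i
    rw [hM'decomp]
    exact sig_union rank _ _ hd4 i
  have hsigN1 : ∀ i, signature rank (K ∪ Xin ∪ Yout) i
      = signature rank (K ∪ Xin) i + signature rank Yout i :=
    fun i => sig_union rank _ _ hd1 i
  have hsigN2 : ∀ i, signature rank (K ∪ Yin ∪ Xout) i
      = signature rank (K ∪ Yin) i + signature rank Xout i :=
    fun i => sig_union rank _ _ hd2 i
  have hXoutH : Xout ⊆ H.edgeSet := fun e he => hGH (hMsub he.1.1)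
  have hYoutH : Yout ⊆ H.edgeSet := fun e he => hM'sub he.1.1
  have hz : ∀ (S : Set (Sym2 V)), S ⊆ H.edgeSet → ∀ i, (i < 1 ∨ r < i) →
      signature rank S i = 0 := by
    intro S hS i hi
    have heq : {e ∈ S | rank e = i} = ∅ := by
      ext e
      simp only [Set.mem_sep_iff, Set.mem_empty_iff_false, iff_false, not_and]
      intro he hri
      have := hr e (hS he)
      omega
    rw [signature, heq, Set.ncard_empty]
  -- the signatures of the outside parts agree
  have hout : ∀ i, signature rank Xout i = signature rank Yout i := by
    by_contra hc
    push_neg at hc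
    have hkspec := Nat.find_spec hc
    have hkmin : ∀ j, j < Nat.find hc → signature rank Xout j = signature rank Yout j :=
      fun j hj => not_not.mp (Nat.find_min hc hj)
    set k := Nat.find hc with hkdef
    have hk1 : 1 ≤ k := by
      rcases Nat.eq_zero_or_pos k with h0 | h1
      · rw [h0] at hkspec
        rw [hz _ hXoutH 0 (Or.inl one_pos), hz _ hYoutH 0 (Or.inl one_pos)] at hkspec
        exact absurd rfl hkspec
      · exact h1
    have hkr : k ≤ r := by
      by_contra h
      push_neg at h
      rw [hz _ hXoutH k (Or.inr h), hz _ hYoutH k (Or.inr h)] at hkspec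
      exact absurd rfl hkspec
    rcases Nat.lt_or_ge (signature rank Xout k) (signature rank Yout k) with hlt | hge
    · refine hMopt _ hN1 ⟨k, hk1, hkr, ?_, ?_⟩
      · intro j h1 hj
        rw [hsigN1 j, hsigM j, hkmin j hj]
      · rw [hsigN1 k, hsigM k]
        omega
    · have hlt : signature rank Yout k < signature rank Xout k :=
        lt_of_le_of_ne hge (fun h => hkspec h.symm)
      refine hM'opt _ hN2 ⟨k, hk1, hkr, ?_, ?_⟩
      · intro j h1 hj
        rw [hsigN2 j, hsigM' j, hkmin j hj]
      · rw [hsigN2 k, hsigM' k]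
        omega
  have hcardout : Xout.ncard = Yout.ncard := by
    rw [card_sig rank r Xout (fun e he => hr e (hXoutH he)),
      card_sig rank r Yout (fun e he => hr e (hYoutH he))]
    exact Finset.sum_congr rfl fun i _ => hout i
  -- reachability restricted to the inside edges
  have hres : ∀ (u v : V) (p : D.Walk u v), D.Reachable a u →
      (SimpleGraph.fromEdgeSet (Xin ∪ Yin)).Reachable u v := by
    intro u v p
    induction p with
    | nil => exact fun _ => SimpleGraph.Reachable.refl _
    | @cons u w v h q ih =>
      intro hu
      have hw : D.Reachable a w := hu.trans h.reachable
      rw [hDdef, SimpleGraph.fromEdgeSet_adj] at h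
      have hadj : (SimpleGraph.fromEdgeSet (Xin ∪ Yin)).Adj u w := by
        rw [SimpleGraph.fromEdgeSet_adj]
        refine ⟨?_, h.2⟩
        rcases h.1 with hx | hy
        · exact Or.inl ⟨hx, u, Sym2.mem_mk_left u w, hu⟩
        · exact Or.inr ⟨hy, u, Sym2.mem_mk_left u w, hu⟩
      exact hadj.reachable.trans (ih hw)
  have haltin : Xin.ncard ≤ Yin.ncard ∧ Yin.ncard ≤ Xin.ncard + 1 := by
    refine altKey (Xin.ncard + Yin.ncard) Xin Yin a (Set.toFinite _) (Set.toFinite _)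
      ?_ ?_ ?_ ?_ ?_ le_rfl
    · rintro e (he | he)
      · exact hdiag e (Set.mem_union_left _ he.1)
      · exact hdiag e (Set.mem_union_right _ he.1)
    · intro e he f hf
      exact hMdis e he.1.1 f hf.1.1
    · intro e he f hf
      exact hM'dis e he.1.1 f hf.1.1
    · intro e he
      exact haM e he.1.1
    · rintro e he
      have hP : ∃ v ∈ e, D.Reachable a v := by
        rcases he with he | he
        · exact he.2
        · exact he.2
      obtain ⟨v, hv, hrv⟩ := hP
      obtain ⟨p⟩ := hrv
      exact ⟨v, hv, hres a v p (SimpleGraph.Reachable.refl a)⟩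
  -- cardinality decompositions
  have hcard1 : M.ncard = (K ∪ Xin).ncard + Xout.ncard := by
    rw [hMdecomp]
    exact Set.ncard_union_eq hd3 (Set.toFinite _) (Set.toFinite _)
  have hcard2 : M'.ncard = (K ∪ Yin).ncard + Yout.ncard := by
    rw [hM'decomp]
    exact Set.ncard_union_eq hd4 (Set.toFinite _) (Set.toFinite _)
  have hcard3 : (K ∪ Xin).ncard = K.ncard + Xin.ncard :=
    Set.ncard_union_eq hd5 (Set.toFinite _) (Set.toFinite _)
  have hcard4 : (K ∪ Yin).ncard = K.ncard + Yin.ncard :=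
    Set.ncard_union_eq hd6 (Set.toFinite _) (Set.toFinite _)
  omega
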